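/- For every v ∈ ℂ^n, the Kobayashi–Royden metric of E_{2m} at the origin equals the Minkowski gauge of E_{2m}: K_{E_{2m}}(0; v) = inf { t > 0 : v/t ∈ E_{2m} }. -/

import Mathlib

open Complex Metric Set Filter Topology

noncomputable section

/-- The pseudo-egg `E_{2m} ⊆ ℂ^n` with `n = k + 1`, written as `ℂ × ℂ^k`. -/
def E2m (k : ℕ) (m : ℝ) : Set (ℂ × (Fin k → ℂ)) :=
  {z | ‖z.1‖ ^ (2 * m) + ∑ j, ‖z.2 j‖ ^ 2 < 1}

/-- The Kobayashi–Royden infinitesimal metric of a domain `D`: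
`K_D(z; v) = inf { λ > 0 : ∃ holomorphic φ : 𝔻 → D, φ(0) = z, λ φ'(0) = v }`. -/
def kobayashiRoyden {X : Type*} [NormedAddCommGroup X] [NormedSpace ℂ X]
    (D : Set X) (z v : X) : ℝ :=
  sInf {l : ℝ | 0 < l ∧ ∃ φ : ℂ → X, DifferentiableOn ℂ φ (Metric.ball (0 : ℂ) 1) ∧
    Set.MapsTo φ (Metric.ball (0 : ℂ) 1) D ∧ φ 0 = z ∧ l • deriv φ 0 = v}

namespace Complex

def abs : AbsoluteValue ℂ ℝ where
  toFun z := ‖z‖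
  map_mul' := norm_mul
  nonneg' := norm_nonneg
  eq_zero' _ := norm_eq_zero
  add_le' := norm_add_le

theorem norm_eq_abs (z : ℂ) : ‖z‖ = abs z := rfl

theorem abs_conj (z : ℂ) : abs ((starRingEnd ℂ) z) = abs z := norm_conj z

theorem abs_of_nonneg {r : ℝ} (h : 0 ≤ r) : abs (r : ℂ) = r := Complex.norm_of_nonneg h

theorem continuous_abs : Continuous abs := continuous_norm

theorem abs_exp (z : ℂ) : abs (exp z) = Real.exp z.re := norm_exp z

theorem normSq_eq_abs (z : ℂ) : normSq z = abs z ^ 2 := normSq_eq_norm_sq z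

end Complex

theorem abs_circleMap_zero (R θ : ℝ) : Complex.abs (circleMap 0 R θ) = |R| := norm_circleMap_zero R θ

lemma mean_value {f : ℂ → ℂ} {r : ℝ} (hr : 0 < r)
    (hc : ContinuousOn f (closedBall 0 r))
    (hd : ∀ z ∈ ball (0:ℂ) r, DifferentiableAt ℂ f z) :
    f 0 = (2*Real.pi)⁻¹ • ∫ θ in (0:ℝ)..2*Real.pi, f (circleMap 0 r θ) := by
  have h0 : (0:ℂ) ∈ ball (0:ℂ) r := by simpa using hr
  have key := Complex.circleIntegral_sub_inv_smul_of_differentiable_on_off_countable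
    (s := ∅) countable_empty h0 hc (fun x hx => hd x hx.1)
  rw [circleIntegral] at key
  simp only [sub_zero, deriv_circleMap] at key
  have heq : ∀ θ : ℝ, (circleMap 0 r θ * I) • (circleMap 0 r θ)⁻¹ • f (circleMap 0 r θ)
      = I • f (circleMap 0 r θ) := by
    intro θ
    have hne : circleMap 0 r θ ≠ 0 := circleMap_ne_center hr.ne'
    rw [smul_smul, smul_eq_mul, smul_eq_mul]
    field_simp
  simp only [heq] at key
  rw [intervalIntegral.integral_smul] at key
  have hI : (I : ℂ) ≠ 0 := I_ne_zero
  have h2 : (∫ θ in (0:ℝ)..2*Real.pi, f (circleMap 0 r θ)) = (2 * (Real.pi:ℂ)) • f 0 := by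
    have h3 := key
    rw [show (2 * (Real.pi:ℂ) * I) = I * (2 * Real.pi) by ring, mul_smul] at h3
    exact smul_right_injective ℂ hI h3
  rw [h2]
  have hpi : (2*Real.pi : ℝ) ≠ 0 := by positivity
  simp only [Complex.real_smul, smul_eq_mul]
  rw [← mul_assoc]
  norm_cast
  rw [show ((2*Real.pi)⁻¹ * (2*Real.pi)) = (1:ℝ) by field_simp]
  simp

lemma abs_mean_value {f : ℂ → ℂ} {r : ℝ} (hr : 0 < r)
    (hc : ContinuousOn f (closedBall 0 r))
    (hd : ∀ z ∈ ball (0:ℂ) r, DifferentiableAt ℂ f z) :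
    Complex.abs (f 0) ≤ (2*Real.pi)⁻¹ * ∫ θ in (0:ℝ)..2*Real.pi, Complex.abs (f (circleMap 0 r θ)) := by
  have h := mean_value hr hc hd
  have hpi : (0:ℝ) < (2*Real.pi)⁻¹ := by positivity
  calc Complex.abs (f 0) = (2*Real.pi)⁻¹ * Complex.abs (∫ θ in (0:ℝ)..2*Real.pi, f (circleMap 0 r θ)) := by
        rw [h]; simp [norm_smul, abs_of_pos hpi, ← Complex.norm_eq_abs, Real.pi_pos.le]
    _ ≤ (2*Real.pi)⁻¹ * ∫ θ in (0:ℝ)..2*Real.pi, Complex.abs (f (circleMap 0 r θ)) := by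
        apply mul_le_mul_of_nonneg_left _ hpi.le
        rw [← Complex.norm_eq_abs]
        simpa [Complex.norm_eq_abs] using
          intervalIntegral.norm_integral_le_integral_norm (f := fun θ => f (circleMap 0 r θ))
            (a := 0) (b := 2*Real.pi) (by positivity)

lemma sq_mean_value {f : ℂ → ℂ} {r : ℝ} (hr : 0 < r)
    (hc : ContinuousOn f (closedBall 0 r))
    (hd : ∀ z ∈ ball (0:ℂ) r, DifferentiableAt ℂ f z) :
    Complex.abs (f 0) ^ 2 ≤ (2*Real.pi)⁻¹ * ∫ θ in (0:ℝ)..2*Real.pi, Complex.abs (f (circleMap 0 r θ)) ^ 2 := by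
  have h := abs_mean_value hr (f := fun z => f z * f z) (hc.mul hc)
    (fun z hz => (hd z hz).mul (hd z hz))
  simpa [map_mul, ← sq] using h


lemma exists_primitive {R : ℝ} (hR : 0 < R) {h : ℂ → ℂ}
    (hh : DifferentiableOn ℂ h (ball 0 R)) :
    ∃ H : ℂ → ℂ, ∀ z ∈ ball (0:ℂ) R, HasDerivAt H (h z) z := by
  have han : AnalyticOnNhd ℂ h (ball 0 R) := hh.analyticOnNhd isOpen_ball
  have hd : DifferentiableOn ℂ (deriv h) (ball 0 R) := han.deriv.differentiableOn
  have hcont : ContinuousOn h (ball 0 R) := hh.continuousOn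
  have hdcont : ContinuousOn (deriv h) (ball 0 R) := hd.continuousOn
  refine ⟨fun z => ∫ t in (0:ℝ)..1, z * h ((t:ℂ) * z), ?_⟩
  intro z₀ hz₀
  have hz₀' : ‖z₀‖ < R := by simpa [mem_ball, dist_eq_norm] using hz₀
  set ε : ℝ := (R - ‖z₀‖)/2 with hε
  have hεpos : 0 < ε := by rw [hε]; linarith
  set R' : ℝ := ‖z₀‖ + ε with hR'
  have hR'R : R' < R := by rw [hR', hε]; linarith
  have hR'0 : 0 ≤ R' := by positivity
  have hball : ∀ x : ℂ, x ∈ ball z₀ ε → ‖x‖ < R' := by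
    intro x hx
    have : ‖x - z₀‖ < ε := by simpa [mem_ball, dist_eq_norm] using hx
    calc ‖x‖ = ‖z₀ + (x - z₀)‖ := by ring_nf
      _ ≤ ‖z₀‖ + ‖x - z₀‖ := norm_add_le _ _
      _ < R' := by rw [hR']; linarith
  have hmem : ∀ (x : ℂ) (t : ℝ), ‖x‖ ≤ R' → |t| ≤ 1 → (t:ℂ) * x ∈ ball (0:ℂ) R := by
    intro x t hx ht
    simp only [mem_ball, dist_eq_norm, sub_zero, norm_mul, Complex.norm_real]
    calc ‖t‖ * ‖x‖ ≤ 1 * R' := by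
          apply mul_le_mul _ hx (norm_nonneg _) zero_le_one
          simpa using ht
      _ < R := by simpa using hR'R
  -- bounds
  have hcompact : IsCompact (closedBall (0:ℂ) R') := isCompact_closedBall _ _
  have hsub : closedBall (0:ℂ) R' ⊆ ball 0 R := closedBall_subset_ball hR'R
  obtain ⟨C₁, hC₁⟩ := hcompact.exists_bound_of_continuousOn (hcont.mono hsub)
  obtain ⟨C₂, hC₂⟩ := hcompact.exists_bound_of_continuousOn (hdcont.mono hsub)
  -- continuity of the integrand families
  have hFc : ∀ x : ℂ, ‖x‖ ≤ R' → ContinuousOn (fun t : ℝ => x * h ((t:ℂ) * x)) (Set.uIcc 0 1) := by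
    intro x hx
    apply continuousOn_const.mul
    apply hcont.comp (Continuous.continuousOn (by fun_prop))
    intro t ht
    rw [Set.uIcc_of_le (zero_le_one)] at ht
    exact hmem x t hx (abs_le.2 ⟨by linarith [ht.1], ht.2⟩)
  have hF'c : ∀ x : ℂ, ‖x‖ ≤ R' →
      ContinuousOn (fun t : ℝ => h ((t:ℂ) * x) + x * (deriv h ((t:ℂ) * x) * (t:ℂ))) (Set.uIcc 0 1) := by
    intro x hx
    have hmaps : ∀ t ∈ Set.uIcc (0:ℝ) 1, (t:ℂ) * x ∈ ball (0:ℂ) R := by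
      intro t ht
      rw [Set.uIcc_of_le (zero_le_one)] at ht
      exact hmem x t hx (abs_le.2 ⟨by linarith [ht.1], ht.2⟩)
    have c1 : ContinuousOn (fun t : ℝ => h ((t:ℂ) * x)) (Set.uIcc 0 1) :=
      hcont.comp (Continuous.continuousOn (by fun_prop)) hmaps
    have c2 : ContinuousOn (fun t : ℝ => deriv h ((t:ℂ) * x)) (Set.uIcc 0 1) :=
      hdcont.comp (Continuous.continuousOn (by fun_prop)) hmaps
    exact c1.add (continuousOn_const.mul (c2.mul (Continuous.continuousOn (by fun_prop))))
  have hIsub : Set.uIoc (0:ℝ) 1 ⊆ Set.uIcc 0 1 := Set.uIoc_subset_uIcc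
  -- the dominated-derivative theorem
  have key := intervalIntegral.hasDerivAt_integral_of_dominated_loc_of_deriv_le
    (F := fun x t => x * h ((t:ℂ) * x))
    (F' := fun x t => h ((t:ℂ) * x) + x * (deriv h ((t:ℂ) * x) * (t:ℂ)))
    (x₀ := z₀) (a := 0) (b := 1) (μ := MeasureTheory.volume)
    (bound := fun _ => C₁ + R' * C₂) (ball_mem_nhds z₀ hεpos)
    (by
      filter_upwards [ball_mem_nhds z₀ hεpos] with x hx
      exact (((hFc x (hball x hx).le).mono hIsub)).aestronglyMeasurable measurableSet_uIoc)
    (((hFc z₀ (by rw [hR']; linarith)).intervalIntegrable))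
    (((hF'c z₀ (by rw [hR']; linarith)).mono hIsub).aestronglyMeasurable measurableSet_uIoc)
    (by
      filter_upwards with t ht x hx
      have htI : 0 < t ∧ t ≤ 1 := by
        rcases Set.mem_uIoc.1 ht with h1 | h1
        · exact ⟨h1.1, h1.2⟩
        · exfalso; linarith [h1.1, h1.2]
      have hxR' : ‖x‖ ≤ R' := (hball x hx).le
      have htx : ‖(t:ℂ) * x‖ ≤ R' := by
        simp only [norm_mul, Complex.norm_real]
        calc ‖t‖ * ‖x‖ ≤ 1 * R' := by
              apply mul_le_mul _ hxR' (norm_nonneg _) zero_le_one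
              simp [Real.norm_eq_abs, abs_le]; constructor <;> linarith [htI.1, htI.2]
          _ = R' := one_mul _
      have b1 : ‖h ((t:ℂ) * x)‖ ≤ C₁ := hC₁ _ (by simpa [mem_closedBall, dist_eq_norm] using htx)
      have b2 : ‖deriv h ((t:ℂ) * x)‖ ≤ C₂ := hC₂ _ (by simpa [mem_closedBall, dist_eq_norm] using htx)
      calc ‖h ((t:ℂ) * x) + x * (deriv h ((t:ℂ) * x) * (t:ℂ))‖
          ≤ ‖h ((t:ℂ) * x)‖ + ‖x * (deriv h ((t:ℂ) * x) * (t:ℂ))‖ := norm_add_le _ _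
        _ ≤ C₁ + R' * C₂ := by
            apply add_le_add b1
            rw [norm_mul, norm_mul, Complex.norm_real]
            calc ‖x‖ * (‖deriv h ((t:ℂ)*x)‖ * ‖t‖) ≤ R' * (C₂ * 1) := by
                  apply mul_le_mul hxR' _ (by positivity) hR'0
                  apply mul_le_mul b2 _ (norm_nonneg _) ((norm_nonneg _).trans b2)
                  simp [Real.norm_eq_abs, abs_le]; constructor <;> linarith [htI.1, htI.2]
              _ = R' * C₂ := by ring)
    intervalIntegrable_const
    (by
      filter_upwards with t ht x hx
      have htI : 0 < t ∧ t ≤ 1 := by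
        rcases Set.mem_uIoc.1 ht with h1 | h1
        · exact ⟨h1.1, h1.2⟩
        · exfalso; linarith [h1.1, h1.2]
      have hxmem : (t:ℂ) * x ∈ ball (0:ℂ) R :=
        hmem x t (hball x hx).le (abs_le.2 ⟨by linarith [htI.1], htI.2⟩)
      have hh_at : HasDerivAt h (deriv h ((t:ℂ)*x)) ((t:ℂ)*x) :=
        (hh.differentiableAt (isOpen_ball.mem_nhds hxmem)).hasDerivAt
      have inner : HasDerivAt (fun y : ℂ => (t:ℂ) * y) ((t:ℂ)) x := by
        simpa using (hasDerivAt_id x).const_mul (t:ℂ)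
      have comp : HasDerivAt (fun y : ℂ => h ((t:ℂ) * y)) (deriv h ((t:ℂ)*x) * (t:ℂ)) x :=
        HasDerivAt.comp x hh_at inner
      have := (hasDerivAt_id' (x := x)).mul comp
      simpa [Pi.mul_def] using this)
  -- value of the derivative: FTC
  have hval : (∫ t in (0:ℝ)..1, (h ((t:ℂ) * z₀) + z₀ * (deriv h ((t:ℂ) * z₀) * (t:ℂ)))) = h z₀ := by
    have hderiv : ∀ t ∈ Set.uIcc (0:ℝ) 1,
        HasDerivAt (fun s : ℝ => (s:ℂ) * h ((s:ℂ) * z₀))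
          (h ((t:ℂ) * z₀) + z₀ * (deriv h ((t:ℂ) * z₀) * (t:ℂ))) t := by
      intro t ht
      rw [Set.uIcc_of_le (zero_le_one)] at ht
      have hxmem : (t:ℂ) * z₀ ∈ ball (0:ℂ) R :=
        hmem z₀ t (by rw [hR']; linarith) (abs_le.2 ⟨by linarith [ht.1], ht.2⟩)
      have hh_at : HasDerivAt h (deriv h ((t:ℂ)*z₀)) ((t:ℂ)*z₀) :=
        (hh.differentiableAt (isOpen_ball.mem_nhds hxmem)).hasDerivAt
      have hw : HasDerivAt (fun z : ℂ => z * h (z * z₀))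
          (1 * h ((t:ℂ) * z₀) + (t:ℂ) * (deriv h ((t:ℂ)*z₀) * z₀)) ((t:ℂ)) := by
        have inner : HasDerivAt (fun z : ℂ => z * z₀) (z₀) ((t:ℂ)) := by
          simpa using (hasDerivAt_id ((t:ℂ))).mul_const z₀
        have comp : HasDerivAt (fun z : ℂ => h (z * z₀)) (deriv h ((t:ℂ)*z₀) * z₀) ((t:ℂ)) :=
          HasDerivAt.comp _ hh_at inner
        exact (hasDerivAt_id ((t:ℂ))).mul comp
      have := hw.comp_ofReal
      have heq : 1 * h ((t:ℂ) * z₀) + (t:ℂ) * (deriv h ((t:ℂ)*z₀) * z₀)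
          = h ((t:ℂ) * z₀) + z₀ * (deriv h ((t:ℂ) * z₀) * (t:ℂ)) := by ring
      rw [heq] at this
      exact this
    have := intervalIntegral.integral_eq_sub_of_hasDerivAt hderiv key.1
    simpa using this
  rw [← hval]
  exact key.2

lemma exists_log {R : ℝ} (hR : 0 < R) {g : ℂ → ℂ}
    (hg : DifferentiableOn ℂ g (ball 0 R)) (hne : ∀ z ∈ ball (0:ℂ) R, g z ≠ 0) :
    ∃ L : ℂ → ℂ, (∀ z ∈ ball (0:ℂ) R, HasDerivAt L (deriv g z / g z) z) ∧
      ∀ z ∈ ball (0:ℂ) R, g z = Complex.exp (L z) := by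
  have hgan : AnalyticOnNhd ℂ g (ball 0 R) := hg.analyticOnNhd isOpen_ball
  have hgd : DifferentiableOn ℂ (deriv g) (ball 0 R) := hgan.deriv.differentiableOn
  have hquot : DifferentiableOn ℂ (fun z => deriv g z / g z) (ball 0 R) := hgd.div hg hne
  obtain ⟨H, hH⟩ := exists_primitive hR hquot
  have h0 : (0:ℂ) ∈ ball (0:ℂ) R := by simpa using hR
  set c : ℂ := Complex.log (g 0) - H 0 with hc
  refine ⟨fun z => H z + c, fun z hz => ((hH z hz).add_const c), ?_⟩
  -- q := g * exp(-(H+c)) is locally constant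
  set q : ℂ → ℂ := fun z => g z * Complex.exp (-(H z + c)) with hq
  have hqd : ∀ z ∈ ball (0:ℂ) R, HasDerivAt q 0 z := by
    intro z hz
    have hgz : HasDerivAt g (deriv g z) z := (hg.differentiableAt (isOpen_ball.mem_nhds hz)).hasDerivAt
    have hLz : HasDerivAt (fun w => -(H w + c)) (-(deriv g z / g z)) z :=
      (((hH z hz).add_const c)).neg
    have hez : HasDerivAt (fun w => Complex.exp (-(H w + c)))
        (Complex.exp (-(H z + c)) * (-(deriv g z / g z))) z := by
      simpa [Function.comp_def] using (Complex.hasDerivAt_exp (-(H z + c))).comp z hLz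
    have := hgz.mul hez
    rw [Pi.mul_def] at this
    refine this.congr_deriv ?_
    have hgz0 : g z ≠ 0 := hne z hz
    have hgd : g z * (deriv g z / g z) = deriv g z := by rw [mul_div_assoc', mul_div_cancel_left₀ _ hgz0]
    linear_combination (-Complex.exp (-(H z + c))) * hgd
  -- q is constant on the ball
  have hconst : ∀ z ∈ ball (0:ℂ) R, q z = q 0 := by
    intro z hz
    have hconv : Convex ℝ (ball (0:ℂ) R) := convex_ball _ _
    apply hconv.is_const_of_fderivWithin_eq_zero (𝕜 := ℂ)
      (fun w hw => ((hqd w hw).differentiableAt.differentiableWithinAt)) _ hz h0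
    intro w hw
    have : fderiv ℂ q w = 0 := by
      have := (hqd w hw).deriv
      have hdz : deriv q w = 0 := this
      ext y
      have := (hqd w hw).hasFDerivAt
      rw [this.fderiv]
      simp
    rw [fderivWithin_of_mem_nhds (isOpen_ball.mem_nhds hw)]
    exact this
  have hq0 : q 0 = 1 := by
    rw [hq]
    simp only []
    rw [show -(H 0 + c) = - Complex.log (g 0) by rw [hc]; ring]
    rw [Complex.exp_neg, Complex.exp_log (hne 0 h0)]
    field_simp [hne 0 h0]
  intro z hz
  have h1 : g z * Complex.exp (-(H z + c)) = 1 := by rw [← hq0]; exact hconst z hz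
  have h2 : (g z * Complex.exp (-(H z + c))) * Complex.exp (H z + c)
      = 1 * Complex.exp (H z + c) := by rw [h1]
  rw [mul_assoc, ← Complex.exp_add, neg_add_cancel, Complex.exp_zero, mul_one, one_mul] at h2
  exact h2

lemma rpow_mean_nonvanishing {R r p : ℝ} (hr : 0 < r) (hrR : r < R) (hp : 0 < p) {g : ℂ → ℂ}
    (hg : DifferentiableOn ℂ g (ball 0 R)) (hne : ∀ z ∈ ball (0:ℂ) R, g z ≠ 0) :
    Complex.abs (g 0) ^ p ≤ (2*Real.pi)⁻¹ * ∫ θ in (0:ℝ)..2*Real.pi, Complex.abs (g (circleMap 0 r θ)) ^ p := by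
  have hR : 0 < R := hr.trans hrR
  obtain ⟨L, hLd, hLe⟩ := exists_log hR hg hne
  set Gp : ℂ → ℂ := fun z => Complex.exp ((p:ℂ) * L z) with hGp
  have habs : ∀ z ∈ ball (0:ℂ) R, Complex.abs (Gp z) = Complex.abs (g z) ^ p := by
    intro z hz
    rw [hGp]
    simp only []
    rw [Complex.abs_exp]
    have h1 : ((p:ℂ) * L z).re = p * (L z).re := by simp [Complex.mul_re]
    rw [h1]
    rw [hLe z hz, Complex.abs_exp]
    rw [Real.rpow_def_of_pos (Real.exp_pos _), Real.log_exp, mul_comm]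
  have hGpd : ∀ z ∈ ball (0:ℂ) R, DifferentiableAt ℂ Gp z := by
    intro z hz
    have : HasDerivAt Gp (Complex.exp ((p:ℂ) * L z) * ((p:ℂ) * (deriv g z / g z))) z := by
      exact (Complex.hasDerivAt_exp _).comp z (((hLd z hz)).const_mul (p:ℂ))
    exact this.differentiableAt
  have hsub : closedBall (0:ℂ) r ⊆ ball 0 R := closedBall_subset_ball hrR
  have hball : ball (0:ℂ) r ⊆ ball 0 R := ball_subset_ball hrR.le
  have key := abs_mean_value hr (f := Gp)
    (fun z hz => ((hGpd z (hsub hz)).continuousAt.continuousWithinAt))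
    (fun z hz => hGpd z (hball hz))
  rw [habs 0 (by simpa using hR)] at key
  have hmem : ∀ θ : ℝ, circleMap 0 r θ ∈ ball (0:ℂ) R := by
    intro θ
    simp [mem_ball, dist_eq_norm, Complex.norm_eq_abs, abs_circleMap_zero, abs_of_pos hr, hrR]
  calc Complex.abs (g 0) ^ p
      ≤ (2*Real.pi)⁻¹ * ∫ θ in (0:ℝ)..2*Real.pi, Complex.abs (Gp (circleMap 0 r θ)) := key
    _ = (2*Real.pi)⁻¹ * ∫ θ in (0:ℝ)..2*Real.pi, Complex.abs (g (circleMap 0 r θ)) ^ p := by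
        congr 1
        apply intervalIntegral.integral_congr
        intro θ _
        exact habs _ (hmem θ)


-- if f vanishes at a but not identically, factor out (z-a)^n globally on the unit ball
lemma factor_zero {f : ℂ → ℂ} (hf : DifferentiableOn ℂ f (ball 0 1)) {a : ℂ}
    (ha : a ∈ ball (0:ℂ) 1) (hfa : f a = 0) (hf0 : f 0 ≠ 0) :
    ∃ (n : ℕ) (g : ℂ → ℂ), 0 < n ∧ DifferentiableOn ℂ g (ball 0 1) ∧ g a ≠ 0 ∧
      ∀ z ∈ ball (0:ℂ) 1, f z = (z - a) ^ n * g z := by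
  have hfan : AnalyticOnNhd ℂ f (ball 0 1) := hf.analyticOnNhd isOpen_ball
  have hfa' : AnalyticAt ℂ f a := hfan a ha
  have hnot : ¬ (∀ᶠ z in 𝓝 a, f z = 0) := by
    intro hev
    have := hfan.eqOn_zero_of_preconnected_of_eventuallyEq_zero
      (convex_ball (0:ℂ) 1).isPreconnected ha hev
    exact hf0 (this (by simp))
  have hord : analyticOrderAt f a ≠ ⊤ := by
    intro htop; exact hnot (analyticOrderAt_eq_top.1 htop)
  obtain ⟨n, hn⟩ := WithTop.ne_top_iff_exists.1 hord
  obtain ⟨gl, hgl, hgla, hev⟩ := (hfa'.analyticOrderAt_eq_natCast (n := n)).1 hn.symm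
  have hn0 : 0 < n := by
    rcases Nat.eq_zero_or_pos n with h0 | h
    · exfalso
      apply hgla
      have hae := hev.self_of_nhds
      rw [h0, pow_zero, one_smul] at hae
      rw [← hae]
      exact hfa
    · exact h
  set g : ℂ → ℂ := fun z => if z = a then gl a else f z / (z - a) ^ n with hgdef
  have hgev : g =ᶠ[𝓝 a] gl := by
    filter_upwards [hev] with z hz
    rcases eq_or_ne z a with rfl | hza
    · simp [hgdef]
    · rw [hgdef]
      simp only [if_neg hza]
      rw [hz, smul_eq_mul]
      have : (z - a) ^ n ≠ 0 := pow_ne_zero _ (sub_ne_zero.2 hza)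
      field_simp
  have hfactor : ∀ z ∈ ball (0:ℂ) 1, f z = (z - a) ^ n * g z := by
    intro z hz
    rcases eq_or_ne z a with rfl | hza
    · rw [hfa]; simp [hn0.ne', sub_self]
    · rw [hgdef]; simp only [if_neg hza]
      have : (z - a) ^ n ≠ 0 := pow_ne_zero _ (sub_ne_zero.2 hza)
      field_simp
  refine ⟨n, g, hn0, ?_, by rw [hgev.self_of_nhds]; exact hgla, hfactor⟩
  intro z hz
  rcases eq_or_ne z a with rfl | hza
  · exact (hgl.congr hgev.symm).differentiableAt.differentiableWithinAt
  · have : DifferentiableAt ℂ (fun w => f w / (w - a) ^ n) z := by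
      apply DifferentiableAt.div
      · exact hf.differentiableAt (isOpen_ball.mem_nhds hz)
      · fun_prop
      · exact pow_ne_zero _ (sub_ne_zero.2 hza)
    have hev2 : (fun w => f w / (w - a) ^ n) =ᶠ[𝓝 z] g := by
      have hmem : {w : ℂ | w ≠ a} ∈ 𝓝 z := isOpen_ne.mem_nhds hza
      filter_upwards [hmem] with w hw
      rw [hgdef]
      simp [if_neg hw]
    exact ((this.congr_of_eventuallyEq hev2.symm)).differentiableWithinAt


lemma finite_zeros {f : ℂ → ℂ} (hf : DifferentiableOn ℂ f (ball 0 1)) (h0 : f 0 ≠ 0)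
    {R : ℝ} (hR : R < 1) : (closedBall (0:ℂ) R ∩ f ⁻¹' {0}).Finite := by
  set K := closedBall (0:ℂ) R with hK
  set Z := K ∩ f ⁻¹' {0} with hZdef
  have hKb : K ⊆ ball 0 1 := closedBall_subset_ball hR
  have hfan : AnalyticOnNhd ℂ f (ball 0 1) := hf.analyticOnNhd isOpen_ball
  have hZc : IsClosed Z :=
    ContinuousOn.preimage_isClosed_of_isClosed (hf.continuousOn.mono hKb)
      Metric.isClosed_closedBall isClosed_singleton
  have hZcp : IsCompact Z := (isCompact_closedBall (0:ℂ) R).of_isClosed_subset hZc inter_subset_left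
  have hloc : ∀ z : Z, ∃ t : Set ℂ, IsOpen t ∧ (z:ℂ) ∈ t ∧ ∀ w ∈ t, w ≠ (z:ℂ) → f w ≠ 0 := by
    rintro ⟨z, hz⟩
    have hfz : AnalyticAt ℂ f z := hfan z (hKb hz.1)
    rcases hfz.eventually_eq_zero_or_eventually_ne_zero with hev | hev
    · exfalso
      have := hfan.eqOn_zero_of_preconnected_of_eventuallyEq_zero
        (convex_ball (0:ℂ) 1).isPreconnected (hKb hz.1) hev
      exact h0 (this (by simp))
    · rw [eventually_nhdsWithin_iff] at hev
      rcases _root_.eventually_nhds_iff.1 hev with ⟨t, ht1, ht2, ht3⟩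
      exact ⟨t, ht2, ht3, fun w hw hwz => ht1 w hw (by simpa using hwz)⟩
  choose t ht1 ht2 ht3 using hloc
  rcases hZcp.elim_finite_subcover t ht1 (fun w hw => mem_iUnion.2 ⟨⟨w, hw⟩, ht2 ⟨w, hw⟩⟩)
    with ⟨s, hs⟩
  have hfin : ((fun i : Z => (i : ℂ)) '' ↑s).Finite := s.finite_toSet.image _
  apply hfin.subset
  intro w hw
  rcases mem_iUnion₂.1 (hs hw) with ⟨i, his, hwi⟩
  rcases eq_or_ne w (i : ℂ) with rfl | hne
  · exact mem_image_of_mem _ his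
  · exact absurd hw.2 (by simpa using ht3 i w hwi hne)

lemma remove_zeros {r : ℝ} (hr : 0 < r) (hr1 : r < 1) :
    ∀ (N : ℕ) (f : ℂ → ℂ), DifferentiableOn ℂ f (ball 0 1) → f 0 ≠ 0 →
    (∀ z ∈ sphere (0:ℂ) r, f z ≠ 0) →
    (closedBall (0:ℂ) r ∩ f ⁻¹' {0}).Finite →
    (closedBall (0:ℂ) r ∩ f ⁻¹' {0}).ncard ≤ N →
    ∃ g : ℂ → ℂ, DifferentiableOn ℂ g (ball 0 1) ∧ (∀ z ∈ closedBall (0:ℂ) r, g z ≠ 0) ∧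
      Complex.abs (f 0) ≤ Complex.abs (g 0) ∧
      ∀ z ∈ sphere (0:ℂ) r, Complex.abs (g z) = Complex.abs (f z) := by
  intro N
  induction N with
  | zero =>
    intro f hfd hf0 hfs hfin hcard
    refine ⟨f, hfd, ?_, le_refl _, fun z _ => rfl⟩
    intro z hz hfz
    have hzZ : z ∈ closedBall (0:ℂ) r ∩ f ⁻¹' {0} := ⟨hz, by simpa using hfz⟩
    have : (closedBall (0:ℂ) r ∩ f ⁻¹' {0}) = ∅ := by
      rw [← Set.ncard_eq_zero hfin]; omega
    rw [this] at hzZ; exact hzZ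
  | succ N ih =>
    intro f hfd hf0 hfs hfin hcard
    by_cases hem : (closedBall (0:ℂ) r ∩ f ⁻¹' {0}) = ∅
    · refine ⟨f, hfd, ?_, le_refl _, fun z _ => rfl⟩
      intro z hz hfz
      have hzZ : z ∈ closedBall (0:ℂ) r ∩ f ⁻¹' {0} := ⟨hz, by simpa using hfz⟩
      rw [hem] at hzZ; exact hzZ
    · obtain ⟨a, haZ⟩ := Set.nonempty_iff_ne_empty.2 hem
      have hacb : a ∈ closedBall (0:ℂ) r := haZ.1
      have hfa : f a = 0 := haZ.2
      have har : Complex.abs a ≤ r := by simpa [mem_closedBall, Complex.dist_eq, Complex.norm_eq_abs] using hacb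
      have harlt : Complex.abs a < r := by
        rcases lt_or_eq_of_le har with h | h
        · exact h
        · exfalso; exact hfs a (by simpa [mem_sphere_iff_norm, Complex.norm_eq_abs] using h) hfa
      have hab : a ∈ ball (0:ℂ) 1 := by
        simp only [mem_ball, Complex.dist_eq, sub_zero]
        exact har.trans_lt hr1
      obtain ⟨n, g₁, hn0, hg₁d, hg₁a, hfac⟩ := factor_zero hfd hab hfa hf0
      have hg₁0 : g₁ 0 ≠ 0 := by
        intro h
        apply hf0
        rw [hfac 0 (by simp), h, mul_zero]
      set B : ℂ → ℂ := fun z => (((r:ℂ)^2 - (starRingEnd ℂ) a * z)/(r:ℂ))^n with hB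
      set g₂ : ℂ → ℂ := fun z => B z * g₁ z with hg₂
      have hrC : (r:ℂ) ≠ 0 := by exact_mod_cast hr.ne'
      have hBne : ∀ z : ℂ, Complex.abs z ≤ r → B z ≠ 0 := by
        intro z hz
        apply pow_ne_zero
        apply div_ne_zero _ hrC
        intro hzero
        have heq : (r:ℂ)^2 = (starRingEnd ℂ) a * z := by
          have := sub_eq_zero.1 hzero; exact this
        have : (r:ℝ)^2 = Complex.abs a * Complex.abs z := by
          have := congrArg Complex.abs heq
          simpa [map_mul, Complex.abs_conj, ← Complex.ofReal_pow, Complex.abs_of_nonneg (by positivity : (0:ℝ) ≤ r^2)] using this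
        nlinarith [Complex.abs.nonneg z, Complex.abs.nonneg a]
      have hg₂d : DifferentiableOn ℂ g₂ (ball 0 1) := by
        apply DifferentiableOn.mul _ hg₁d
        apply Differentiable.differentiableOn
        fun_prop
      have hg₂0 : g₂ 0 ≠ 0 := mul_ne_zero (hBne 0 (by simp [hr.le])) hg₁0
      -- |f 0| ≤ |g₂ 0|
      have habs0 : Complex.abs (f 0) ≤ Complex.abs (g₂ 0) := by
        have h1 : f 0 = (0 - a)^n * g₁ 0 := hfac 0 (by simp)
        have h2 : g₂ 0 = ((r:ℂ)^2/(r:ℂ))^n * g₁ 0 := by rw [hg₂, hB]; simp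
        rw [h1, h2, map_mul, map_mul]
        apply mul_le_mul_of_nonneg_right _ (Complex.abs.nonneg _)
        rw [map_pow, map_pow]
        apply pow_le_pow_left₀ (Complex.abs.nonneg _)
        rw [zero_sub, map_neg_eq_map]
        calc Complex.abs a ≤ r := har
          _ = Complex.abs ((r:ℂ)^2/(r:ℂ)) := by
              rw [map_div₀, ← Complex.ofReal_pow, Complex.abs_of_nonneg (by positivity : (0:ℝ) ≤ r^2),
                Complex.abs_of_nonneg hr.le]
              field_simp
      -- on the sphere, |B z| = |z - a|^n
      have hBsphere : ∀ z ∈ sphere (0:ℂ) r, Complex.abs (B z) = Complex.abs (z - a) ^ n := by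
        intro z hz
        have hzr : Complex.abs z = r := by simpa [mem_sphere_iff_norm, Complex.norm_eq_abs] using hz
        have hz2 : ((r:ℂ))^2 = (starRingEnd ℂ) z * z := by
          rw [← Complex.normSq_eq_conj_mul_self]
          rw [Complex.normSq_eq_abs, hzr]
          push_cast; ring
        have hnum : (r:ℂ)^2 - (starRingEnd ℂ) a * z = (starRingEnd ℂ) (z - a) * z := by
          rw [hz2, map_sub]; ring
        rw [hB]
        simp only [map_pow]
        congr 1
        rw [hnum, map_div₀, map_mul, Complex.abs_conj, hzr, Complex.abs_of_nonneg hr.le]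
        field_simp
      have hsphere2 : ∀ z ∈ sphere (0:ℂ) r, Complex.abs (g₂ z) = Complex.abs (f z) := by
        intro z hz
        have hzb : z ∈ ball (0:ℂ) 1 := by
          have : Complex.abs z = r := by simpa [mem_sphere_iff_norm, Complex.norm_eq_abs] using hz
          simp only [mem_ball, Complex.dist_eq, sub_zero]
          rw [Complex.norm_eq_abs, this]; exact hr1
        rw [hg₂]
        simp only []
        rw [map_mul, hBsphere z hz, hfac z hzb, map_mul, map_pow]
      -- zero set decreases
      have hsub2 : (closedBall (0:ℂ) r ∩ g₂ ⁻¹' {0}) ⊆ (closedBall (0:ℂ) r ∩ f ⁻¹' {0}) \ {a} := by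
        rintro z ⟨hz1, hz2'⟩
        have hg₂z : g₂ z = 0 := by simpa using hz2'
        have hzr : Complex.abs z ≤ r := by simpa [mem_closedBall, Complex.dist_eq, Complex.norm_eq_abs] using hz1
        have hg₁z : g₁ z = 0 := by
          rcases mul_eq_zero.1 hg₂z with h | h
          · exact absurd h (hBne z hzr)
          · exact h
        have hza : z ≠ a := fun h => hg₁a (h ▸ hg₁z)
        have hzb : z ∈ ball (0:ℂ) 1 := by
          simp only [mem_ball, Complex.dist_eq, sub_zero]; exact hzr.trans_lt hr1
        exact ⟨⟨hz1, by simp [hfac z hzb, hg₁z]⟩, by simpa using hza⟩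
      have hfin2 : (closedBall (0:ℂ) r ∩ g₂ ⁻¹' {0}).Finite :=
        (hfin.diff).subset hsub2
      have hcard2 : (closedBall (0:ℂ) r ∩ g₂ ⁻¹' {0}).ncard ≤ N := by
        have h1 : ((closedBall (0:ℂ) r ∩ f ⁻¹' {0}) \ {a}).ncard
            = (closedBall (0:ℂ) r ∩ f ⁻¹' {0}).ncard - 1 :=
          Set.ncard_diff_singleton_of_mem haZ
        have h2 : (closedBall (0:ℂ) r ∩ g₂ ⁻¹' {0}).ncard
            ≤ ((closedBall (0:ℂ) r ∩ f ⁻¹' {0}) \ {a}).ncard :=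
          Set.ncard_le_ncard hsub2 (hfin.diff)
        have h3 : 0 < (closedBall (0:ℂ) r ∩ f ⁻¹' {0}).ncard :=
          (Set.ncard_pos hfin).2 ⟨a, haZ⟩
        omega
      have hsph2 : ∀ z ∈ sphere (0:ℂ) r, g₂ z ≠ 0 := by
        intro z hz h
        apply hfs z hz
        have := hsphere2 z hz
        rw [h] at this
        simp only [map_zero] at this
        exact (Complex.abs.eq_zero.1 this.symm)
      obtain ⟨g, hgd, hgne, hgabs, hgsph⟩ := ih g₂ hg₂d hg₂0 hsph2 hfin2 hcard2
      exact ⟨g, hgd, hgne, habs0.trans hgabs, fun z hz => (hgsph z hz).trans (hsphere2 z hz)⟩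

lemma submean {f : ℂ → ℂ} (hf : DifferentiableOn ℂ f (ball 0 1)) {p s : ℝ} (hp : 0 < p)
    (hs0 : 0 < s) (hs1 : s < 1) :
    ∃ r, s ≤ r ∧ r < 1 ∧ Complex.abs (f 0) ^ p
      ≤ (2*Real.pi)⁻¹ * ∫ θ in (0:ℝ)..2*Real.pi, Complex.abs (f (circleMap 0 r θ)) ^ p := by
  have hpi : (0:ℝ) < 2*Real.pi := by positivity
  by_cases h0 : f 0 = 0
  · refine ⟨s, le_refl _, hs1, ?_⟩
    rw [h0, map_zero, Real.zero_rpow hp.ne']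
    have : 0 ≤ ∫ θ in (0:ℝ)..2*Real.pi, Complex.abs (f (circleMap 0 s θ)) ^ p := by
      apply intervalIntegral.integral_nonneg hpi.le
      intro u _
      exact Real.rpow_nonneg (Complex.abs.nonneg _) _
    positivity
  · set R₁ : ℝ := (1+s)/2 with hR₁
    have hsR₁ : s < R₁ := by rw [hR₁]; linarith
    have hR₁1 : R₁ < 1 := by rw [hR₁]; linarith
    have hZfin : (closedBall (0:ℂ) R₁ ∩ f ⁻¹' {0}).Finite := finite_zeros hf h0 hR₁1
    have hMfin : (Complex.abs '' (closedBall (0:ℂ) R₁ ∩ f ⁻¹' {0})).Finite := hZfin.image _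
    have hIoo : (Set.Ioo s R₁).Infinite := Set.Ioo_infinite hsR₁
    obtain ⟨r, hrIoo⟩ := (hIoo.diff hMfin).nonempty
    have hrs : s < r := hrIoo.1.1
    have hrR₁ : r < R₁ := hrIoo.1.2
    have hr0 : 0 < r := hs0.trans hrs
    have hr1 : r < 1 := hrR₁.trans hR₁1
    have hsphere : ∀ z ∈ sphere (0:ℂ) r, f z ≠ 0 := by
      intro z hz hfz
      have hzr : Complex.abs z = r := by simpa [mem_sphere_iff_norm, Complex.norm_eq_abs] using hz
      apply hrIoo.2
      exact ⟨z, ⟨by simp [mem_closedBall, Complex.dist_eq, Complex.norm_eq_abs, hzr]; linarith, by simpa using hfz⟩, hzr⟩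
    have hZrfin : (closedBall (0:ℂ) r ∩ f ⁻¹' {0}).Finite :=
      hZfin.subset (inter_subset_inter_left _ (closedBall_subset_closedBall hrR₁.le))
    obtain ⟨g, hgd, hgne, hgabs, hgsph⟩ := remove_zeros hr0 hr1
      (closedBall (0:ℂ) r ∩ f ⁻¹' {0}).ncard f hf h0 hsphere hZrfin (le_refl _)
    -- enlarge the nonvanishing region
    set W : Set ℂ := ball (0:ℂ) 1 ∩ g ⁻¹' {(0:ℂ)}ᶜ with hW
    have hWopen : IsOpen W := hgd.continuousOn.isOpen_inter_preimage isOpen_ball isOpen_compl_singleton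
    have hKW : closedBall (0:ℂ) r ⊆ W := by
      intro z hz
      exact ⟨closedBall_subset_ball hr1 hz, by simpa using hgne z hz⟩
    obtain ⟨δ, hδ0, hδsub⟩ := (isCompact_closedBall (0:ℂ) r).exists_thickening_subset_open hWopen hKW
    set R₂ : ℝ := min (δ + r) ((r+1)/2) with hR₂
    have hrR₂ : r < R₂ := by
      rw [hR₂]; apply lt_min (by linarith) (by linarith)
    have hR₂1 : R₂ < 1 := by
      rw [hR₂]
      calc min (δ + r) ((r+1)/2) ≤ (r+1)/2 := min_le_right _ _
        _ < 1 := by linarith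
    have hballW : ball (0:ℂ) R₂ ⊆ W := by
      intro z hz
      apply hδsub
      rw [thickening_closedBall hδ0 hr0.le]
      exact ball_subset_ball (min_le_left _ _) hz
    have hgd2 : DifferentiableOn ℂ g (ball 0 R₂) := hgd.mono (ball_subset_ball hR₂1.le)
    have hne2 : ∀ z ∈ ball (0:ℂ) R₂, g z ≠ 0 := by
      intro z hz
      have := (hballW hz).2
      simpa using this
    have key := rpow_mean_nonvanishing hr0 hrR₂ hp hgd2 hne2
    refine ⟨r, hrs.le, hr1, ?_⟩
    have heqint : (∫ θ in (0:ℝ)..2*Real.pi, Complex.abs (g (circleMap 0 r θ)) ^ p)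
        = ∫ θ in (0:ℝ)..2*Real.pi, Complex.abs (f (circleMap 0 r θ)) ^ p := by
      apply intervalIntegral.integral_congr
      intro θ _
      simp only []
      rw [hgsph _ (circleMap_mem_sphere (0:ℂ) hr0.le θ)]
    rw [← heqint]
    exact le_trans (Real.rpow_le_rpow (Complex.abs.nonneg _) hgabs hp.le) key

lemma schwarz {k : ℕ} {m : ℝ} (hm0 : 0 < m) (hm : m < 1/2)
    {φ : ℂ → ℂ × (Fin k → ℂ)} (hφd : DifferentiableOn ℂ φ (ball 0 1))
    (hmaps : MapsTo φ (ball 0 1) (E2m k m)) (h0 : φ 0 = 0) :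
    Complex.abs ((deriv φ 0).1) ^ (2*m) + ∑ j, Complex.abs ((deriv φ 0).2 j) ^ 2 ≤ 1 := by
  have hpi : (0:ℝ) < 2*Real.pi := by positivity
  have hball0 : (ball (0:ℂ) 1) ∈ 𝓝 (0:ℂ) := isOpen_ball.mem_nhds (by simp)
  obtain ⟨ψ, hψd, hψ0, hψz⟩ : ∃ ψ : ℂ → ℂ × (Fin k → ℂ), DifferentiableOn ℂ ψ (ball 0 1) ∧
      ψ 0 = deriv φ 0 ∧ ∀ z : ℂ, z ≠ 0 → ψ z = z⁻¹ • φ z := by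
    refine ⟨dslope φ 0, (Complex.differentiableOn_dslope hball0).2 hφd, dslope_same φ 0, ?_⟩
    intro z hz
    rw [dslope_of_ne _ hz, slope]
    simp [h0]
  set ψ₁ : ℂ → ℂ := fun z => (ψ z).1 with hψ₁def
  have hψ₁d : DifferentiableOn ℂ ψ₁ (ball 0 1) := hψd.fst
  have hψjd : ∀ j : Fin k, DifferentiableOn ℂ (fun z => (ψ z).2 j) (ball 0 1) := by
    intro j
    exact ((ContinuousLinearMap.proj j : (Fin k → ℂ) →L[ℂ] ℂ).differentiable).comp_differentiableOn hψd.snd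
  set T : ℝ := Complex.abs ((deriv φ 0).1) ^ (2*m) + ∑ j, Complex.abs ((deriv φ 0).2 j) ^ 2 with hT
  have hmain : ∀ s : ℝ, 0 < s → s < 1 → T ≤ (s*s)⁻¹ := by
    intro s hs0 hs1
    obtain ⟨r, hsr, hr1, h1⟩ := submean hψ₁d (by positivity : (0:ℝ) < 2*m) hs0 hs1
    have hr0 : 0 < r := hs0.trans_le hsr
    have hsub : closedBall (0:ℂ) r ⊆ ball 0 1 := closedBall_subset_ball hr1
    have hsubb : ball (0:ℂ) r ⊆ ball 0 1 := ball_subset_ball hr1.le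
    have h2 : ∀ j : Fin k, Complex.abs ((ψ 0).2 j) ^ 2
        ≤ (2*Real.pi)⁻¹ * ∫ θ in (0:ℝ)..2*Real.pi, Complex.abs ((ψ (circleMap 0 r θ)).2 j) ^ 2 := by
      intro j
      exact sq_mean_value (f := fun z => (ψ z).2 j) hr0 ((hψjd j).continuousOn.mono hsub)
        (fun z hz => (hψjd j).differentiableAt (isOpen_ball.mem_nhds (hsubb hz)))
    -- integrability
    have hcont1 : Continuous (fun θ : ℝ => Complex.abs (ψ₁ (circleMap 0 r θ)) ^ (2*m)) := by
      apply Continuous.rpow_const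
      · apply Complex.continuous_abs.comp
        apply hψ₁d.continuousOn.comp_continuous (continuous_circleMap 0 r)
        intro θ
        simp [mem_ball, Complex.dist_eq, abs_circleMap_zero, abs_of_pos hr0, hr1]
      · intro x; right; positivity
    have hcontj : ∀ j : Fin k, Continuous (fun θ : ℝ => Complex.abs ((ψ (circleMap 0 r θ)).2 j) ^ 2) := by
      intro j
      apply Continuous.pow
      apply Complex.continuous_abs.comp
      apply ((hψjd j).continuousOn.comp_continuous (continuous_circleMap 0 r))
      intro θ
      simp [mem_ball, Complex.dist_eq, abs_circleMap_zero, abs_of_pos hr0, hr1]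
    -- sum up
    have hsum : T ≤ (2*Real.pi)⁻¹ * ∫ θ in (0:ℝ)..2*Real.pi,
        (Complex.abs (ψ₁ (circleMap 0 r θ)) ^ (2*m) + ∑ j, Complex.abs ((ψ (circleMap 0 r θ)).2 j) ^ 2) := by
      rw [intervalIntegral.integral_add (hcont1.intervalIntegrable _ _)
        ((continuous_finset_sum _ (fun j _ => hcontj j)).intervalIntegrable _ _)]
      rw [intervalIntegral.integral_finset_sum (fun j _ => (hcontj j).intervalIntegrable _ _)]
      rw [mul_add, Finset.mul_sum]
      rw [hT]
      apply add_le_add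
      · rw [← hψ0]; exact h1
      · rw [← hψ0]; exact Finset.sum_le_sum (fun j _ => h2 j)
    -- pointwise bound
    have hpoint : ∀ θ : ℝ, Complex.abs (ψ₁ (circleMap 0 r θ)) ^ (2*m)
        + ∑ j, Complex.abs ((ψ (circleMap 0 r θ)).2 j) ^ 2 ≤ (r*r)⁻¹ := by
      intro θ
      set z := circleMap 0 r θ with hz
      have hzne : z ≠ 0 := circleMap_ne_center hr0.ne'
      have hzabs : Complex.abs z = r := by simp [hz, abs_circleMap_zero, abs_of_pos hr0]
      have hzball : z ∈ ball (0:ℂ) 1 := by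
        simp [mem_ball, Complex.dist_eq, hzabs, hz, abs_circleMap_zero, abs_of_pos hr0, hr1]
      have hψzz := hψz z hzne
      have hE := hmaps hzball
      rw [E2m, mem_setOf_eq] at hE
      have habs1 : Complex.abs (ψ₁ z) = r⁻¹ * Complex.abs ((φ z).1) := by
        rw [hψ₁def]
        simp only [hψzz, Prod.smul_fst, smul_eq_mul, map_mul, map_inv₀, hzabs]
      have habsj : ∀ j, Complex.abs ((ψ z).2 j) = r⁻¹ * Complex.abs ((φ z).2 j) := by
        intro j
        rw [hψzz]
        simp only [Prod.smul_snd, Pi.smul_apply, smul_eq_mul, map_mul, map_inv₀, hzabs]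
      have hrinv1 : (1:ℝ) ≤ r⁻¹ := by
        rw [le_inv_comm₀] <;> simp [hr0, hr1.le]
      have hb1 : Complex.abs (ψ₁ z) ^ (2*m) ≤ (r*r)⁻¹ * Complex.abs ((φ z).1) ^ (2*m) := by
        rw [habs1, Real.mul_rpow (by positivity) (Complex.abs.nonneg _)]
        apply mul_le_mul_of_nonneg_right _ (Real.rpow_nonneg (Complex.abs.nonneg _) _)
        calc (r⁻¹) ^ (2*m) ≤ (r⁻¹) ^ (2:ℝ) :=
              Real.rpow_le_rpow_of_exponent_le hrinv1 (by linarith)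
          _ = (r*r)⁻¹ := by
              rw [show (2:ℝ) = ((2:ℕ):ℝ) by norm_num, Real.rpow_natCast]
              rw [pow_two, mul_inv]
      have hbj : ∀ j, Complex.abs ((ψ z).2 j) ^ 2 = (r*r)⁻¹ * Complex.abs ((φ z).2 j) ^ 2 := by
        intro j
        rw [habsj j]
        ring
      calc Complex.abs (ψ₁ z) ^ (2*m) + ∑ j, Complex.abs ((ψ z).2 j) ^ 2
          ≤ (r*r)⁻¹ * Complex.abs ((φ z).1) ^ (2*m) + ∑ j, (r*r)⁻¹ * Complex.abs ((φ z).2 j) ^ 2 := by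
            apply add_le_add hb1
            apply le_of_eq
            exact Finset.sum_congr rfl (fun j _ => hbj j)
        _ = (r*r)⁻¹ * (Complex.abs ((φ z).1) ^ (2*m) + ∑ j, Complex.abs ((φ z).2 j) ^ 2) := by
            rw [← Finset.mul_sum]; ring
        _ ≤ (r*r)⁻¹ * 1 := by
            apply mul_le_mul_of_nonneg_left hE.le (by positivity)
        _ = (r*r)⁻¹ := mul_one _
    have hint : (∫ θ in (0:ℝ)..2*Real.pi,
        (Complex.abs (ψ₁ (circleMap 0 r θ)) ^ (2*m) + ∑ j, Complex.abs ((ψ (circleMap 0 r θ)).2 j) ^ 2))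
        ≤ ∫ _ in (0:ℝ)..2*Real.pi, (r*r)⁻¹ := by
      apply intervalIntegral.integral_mono_on hpi.le
        ((hcont1.add (continuous_finset_sum _ (fun j _ => hcontj j))).intervalIntegrable _ _)
        intervalIntegrable_const
      intro θ _
      exact hpoint θ
    have : T ≤ (2*Real.pi)⁻¹ * (2*Real.pi * (r*r)⁻¹) := by
      apply hsum.trans
      apply mul_le_mul_of_nonneg_left _ (by positivity)
      apply le_trans hint
      rw [intervalIntegral.integral_const, smul_eq_mul]
      apply le_of_eq
      ring
    rw [← mul_assoc, inv_mul_cancel₀ hpi.ne', one_mul] at this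
    apply this.trans
    apply inv_anti₀ (by positivity)
    apply mul_le_mul hsr hsr hs0.le hr0.le
  -- conclude T ≤ 1
  by_contra hcon
  push_neg at hcon
  have hT0 : 0 < T := lt_trans one_pos hcon
  set u : ℝ := Real.sqrt T⁻¹ with hu
  have hu0 : 0 < u := Real.sqrt_pos.2 (by positivity)
  have hu1 : u < 1 := by
    rw [hu]
    rw [show (1:ℝ) = Real.sqrt 1 by simp]
    apply Real.sqrt_lt_sqrt (by positivity)
    rw [inv_lt_one_iff₀]; right; exact hcon
  set s : ℝ := (u+1)/2 with hs
  have hs0 : 0 < s := by rw [hs]; linarith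
  have hs1 : s < 1 := by rw [hs]; linarith
  have hus : u < s := by rw [hs]; linarith
  have := hmain s hs0 hs1
  have huu : u * u = T⁻¹ := Real.mul_self_sqrt (by positivity)
  have hss : T⁻¹ < s * s := by
    rw [← huu]
    apply mul_lt_mul hus hus.le hu0 hs0.le
  have : T ≤ (s*s)⁻¹ := this
  have h2 : (s*s)⁻¹ < T := by
    rw [← inv_inv T]
    apply inv_strictAnti₀ (by positivity) hss
  linarith

theorem statement5 (k : ℕ) (hk : 1 ≤ k) (m : ℝ) (hm0 : 0 < m) (hm : m < 1 / 2)
    (v : ℂ × (Fin k → ℂ)) :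
    kobayashiRoyden (E2m k m) 0 v = sInf {t : ℝ | 0 < t ∧ t⁻¹ • v ∈ E2m k m} := by
  have hm2 : 0 < 2 * m := by linarith
  set F : ℂ × (Fin k → ℂ) → ℝ :=
    fun w => Complex.abs w.1 ^ (2 * m) + ∑ j, Complex.abs (w.2 j) ^ 2 with hF
  have hFmem : ∀ w : ℂ × (Fin k → ℂ), w ∈ E2m k m ↔ F w < 1 := by
    intro w; rw [E2m, hF]; rfl
  have hFnonneg : ∀ w, 0 ≤ F w := by
    intro w; rw [hF]
    apply add_nonneg (Real.rpow_nonneg (Complex.abs.nonneg _) _)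
    apply Finset.sum_nonneg; intro j _; positivity
  -- scaling computation for a real scalar
  have hFsmul : ∀ (c : ℝ) (w : ℂ × (Fin k → ℂ)), 0 ≤ c →
      F (c • w) = c ^ (2*m) * Complex.abs w.1 ^ (2*m) + c^2 * ∑ j, Complex.abs (w.2 j) ^ 2 := by
    intro c w hc0
    have h1 : Complex.abs ((c • w).1) = c * Complex.abs w.1 := by
      rw [Prod.smul_fst, ← Complex.norm_eq_abs, ← Complex.norm_eq_abs, norm_smul,
        Real.norm_eq_abs, _root_.abs_of_nonneg hc0]
    have h2 : ∀ j, Complex.abs ((c • w).2 j) = c * Complex.abs (w.2 j) := by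
      intro j
      rw [Prod.smul_snd, Pi.smul_apply, ← Complex.norm_eq_abs, ← Complex.norm_eq_abs, norm_smul,
        Real.norm_eq_abs, _root_.abs_of_nonneg hc0]
    rw [hF]
    simp only [h1]
    rw [Real.mul_rpow hc0 (Complex.abs.nonneg _), Finset.mul_sum]
    congr 1
    apply Finset.sum_congr rfl
    intro j _
    rw [h2 j]; ring
  -- scaling by a complex scalar of modulus ≤ 1 keeps us in the egg
  have hscaleC : ∀ (ζ : ℂ) (w : ℂ × (Fin k → ℂ)), Complex.abs ζ ≤ 1 → F w < 1 →
      (ζ • w) ∈ E2m k m := by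
    intro ζ w hζ hw
    rw [hFmem]
    have h1 : Complex.abs ((ζ • w).1) = Complex.abs ζ * Complex.abs w.1 := by
      rw [Prod.smul_fst, smul_eq_mul, map_mul]
    have h2 : ∀ j, Complex.abs ((ζ • w).2 j) = Complex.abs ζ * Complex.abs (w.2 j) := by
      intro j
      rw [Prod.smul_snd, Pi.smul_apply, smul_eq_mul, map_mul]
    have hFw := hFnonneg w
    rw [hF] at hw hFw ⊢
    simp only [h1]
    calc (Complex.abs ζ * Complex.abs w.1) ^ (2*m) + ∑ j, Complex.abs ((ζ • w).2 j) ^ 2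
        = Complex.abs ζ ^ (2*m) * Complex.abs w.1 ^ (2*m)
          + Complex.abs ζ ^ 2 * ∑ j, Complex.abs (w.2 j) ^ 2 := by
          rw [Real.mul_rpow (Complex.abs.nonneg _) (Complex.abs.nonneg _), Finset.mul_sum]
          congr 1
          apply Finset.sum_congr rfl
          intro j _
          rw [h2 j]; ring
      _ ≤ 1 * Complex.abs w.1 ^ (2*m) + 1 * ∑ j, Complex.abs (w.2 j) ^ 2 := by
          apply add_le_add
          · exact mul_le_mul_of_nonneg_right (Real.rpow_le_one (Complex.abs.nonneg _) hζ hm2.le)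
              (Real.rpow_nonneg (Complex.abs.nonneg _) _)
          · apply mul_le_mul_of_nonneg_right (pow_le_one₀ (Complex.abs.nonneg _) hζ)
            apply Finset.sum_nonneg; intro j _; positivity
      _ = Complex.abs w.1 ^ (2*m) + ∑ j, Complex.abs (w.2 j) ^ 2 := by ring
      _ < 1 := hw
  -- strict scaling for a real scalar < 1
  have hscaleR : ∀ (c : ℝ) (w : ℂ × (Fin k → ℂ)), 0 ≤ c → c < 1 → F w ≤ 1 →
      F (c • w) < 1 := by
    intro c w hc0 hc1 hw
    set M : ℝ := max (c ^ (2*m)) (c^2) with hM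
    have hM1 : M < 1 := by
      rw [hM]
      apply max_lt (Real.rpow_lt_one hc0 hc1 hm2) (by nlinarith)
    have hA : (0:ℝ) ≤ Complex.abs w.1 ^ (2*m) := Real.rpow_nonneg (Complex.abs.nonneg _) _
    have hB : (0:ℝ) ≤ ∑ j, Complex.abs (w.2 j) ^ 2 := by
      apply Finset.sum_nonneg; intro j _; positivity
    have hM0 : 0 ≤ M := le_max_of_le_right (by positivity)
    rw [hFsmul c w hc0]
    calc c ^ (2*m) * Complex.abs w.1 ^ (2*m) + c^2 * ∑ j, Complex.abs (w.2 j) ^ 2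
        ≤ M * Complex.abs w.1 ^ (2*m) + M * ∑ j, Complex.abs (w.2 j) ^ 2 := by
          apply add_le_add
          · exact mul_le_mul_of_nonneg_right (le_max_left _ _) hA
          · exact mul_le_mul_of_nonneg_right (le_max_right _ _) hB
      _ = M * F w := by rw [hF]; ring
      _ ≤ M * 1 := mul_le_mul_of_nonneg_left hw hM0
      _ < 1 := by rw [mul_one]; exact hM1
  set SK : Set ℝ := {l : ℝ | 0 < l ∧ ∃ φ : ℂ → ℂ × (Fin k → ℂ),
    DifferentiableOn ℂ φ (Metric.ball (0 : ℂ) 1) ∧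
    Set.MapsTo φ (Metric.ball (0 : ℂ) 1) (E2m k m) ∧ φ 0 = 0 ∧ l • deriv φ 0 = v} with hSK
  set SG : Set ℝ := {t : ℝ | 0 < t ∧ t⁻¹ • v ∈ E2m k m} with hSG
  -- SG ⊆ SK
  have hsub : SG ⊆ SK := by
    rintro t ⟨ht0, htv⟩
    refine ⟨ht0, fun ζ => ζ • (t⁻¹ • v), ?_, ?_, ?_, ?_⟩
    · intro ζ _
      exact ((hasDerivAt_id ζ).smul_const (t⁻¹ • v)).differentiableAt.differentiableWithinAt
    · intro ζ hζ
      have hζ1 : Complex.abs ζ ≤ 1 := by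
        simp only [mem_ball, Complex.dist_eq, sub_zero] at hζ
        exact hζ.le
      exact hscaleC ζ _ hζ1 ((hFmem _).1 htv)
    · exact zero_smul _ _
    · have hd : deriv (fun ζ : ℂ => ζ • (t⁻¹ • v)) 0 = t⁻¹ • v := by
        have := ((hasDerivAt_id (0:ℂ)).smul_const (t⁻¹ • v)).deriv
        simpa using this
      rw [hd, smul_smul, mul_inv_cancel₀ ht0.ne', one_smul]
  -- SG is nonempty
  have hSGne : SG.Nonempty := by
    set A : ℝ := Complex.abs v.1 ^ (2*m) with hA
    set B : ℝ := ∑ j, Complex.abs (v.2 j) ^ 2 with hB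
    have hA0 : 0 ≤ A := Real.rpow_nonneg (Complex.abs.nonneg _) _
    have hB0 : 0 ≤ B := by apply Finset.sum_nonneg; intro j _; positivity
    obtain ⟨t, ht0, htpow, htsq⟩ :
        ∃ t : ℝ, 0 < t ∧ (2*A+2) ≤ t ^ (2*m) ∧ (2*B+2) ≤ t^2 := by
      refine ⟨(2*A+2) ^ ((1:ℝ)/(2*m)) + Real.sqrt (2*B+2), ?_, ?_, ?_⟩
      · have h1 : (0:ℝ) ≤ (2*A+2) ^ ((1:ℝ)/(2*m)) := Real.rpow_nonneg (by linarith) _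
        have h2 : (0:ℝ) < Real.sqrt (2*B+2) := Real.sqrt_pos.2 (by linarith)
        linarith
      · calc (2*A+2) = ((2*A+2) ^ ((1:ℝ)/(2*m))) ^ (2*m) := by
              rw [← Real.rpow_mul (by linarith), one_div, inv_mul_cancel₀ hm2.ne', Real.rpow_one]
          _ ≤ _ := by
              apply Real.rpow_le_rpow (Real.rpow_nonneg (by linarith) _) _ hm2.le
              have h2 : (0:ℝ) ≤ Real.sqrt (2*B+2) := Real.sqrt_nonneg _
              linarith
      · calc (2*B+2) = Real.sqrt (2*B+2) ^ 2 := (Real.sq_sqrt (by linarith)).symm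
          _ ≤ _ := by
              apply pow_le_pow_left₀ (Real.sqrt_nonneg _)
              have h1 : (0:ℝ) ≤ (2*A+2) ^ ((1:ℝ)/(2*m)) := Real.rpow_nonneg (by linarith) _
              linarith
    refine ⟨t, ht0, ?_⟩
    rw [hFmem]
    rw [hFsmul _ _ (inv_nonneg.2 ht0.le)]
    rw [Real.inv_rpow ht0.le]
    have hlt1 : (t ^ (2*m))⁻¹ * A < 1/2 := by
      have h1 : 0 < t ^ (2*m) := Real.rpow_pos_of_pos ht0 _
      rw [inv_mul_eq_div, div_lt_iff₀ h1]
      linarith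
    have hlt2 : (t⁻¹)^2 * B < 1/2 := by
      have h1 : 0 < t^2 := by positivity
      rw [inv_pow, inv_mul_eq_div, div_lt_iff₀ h1]
      linarith
    rw [← hA, ← hB]
    linarith
  have hSGbdd : BddBelow SG := ⟨0, fun l hl => hl.1.le⟩
  have hSKbdd : BddBelow SK := ⟨0, fun l hl => hl.1.le⟩
  have hSKne : SK.Nonempty := hSGne.mono hsub
  apply le_antisymm
  · exact csInf_le_csInf hSKbdd hSGne hsub
  · apply le_csInf hSKne
    rintro l ⟨hl0, φ, hφd, hmaps, hφ0, hlv⟩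
    have hFd : F (deriv φ 0) ≤ 1 := by
      have := schwarz hm0 (by linarith) hφd hmaps hφ0
      rw [hF]; exact this
    have hderiv : deriv φ 0 = l⁻¹ • v := by
      rw [← hlv, smul_smul, inv_mul_cancel₀ hl0.ne', one_smul]
    have hmemSG : ∀ u : ℝ, l < u → u ∈ SG := by
      intro u hu
      have hu0 : 0 < u := hl0.trans hu
      refine ⟨hu0, ?_⟩
      have hc : u⁻¹ • v = (l * u⁻¹) • (l⁻¹ • v) := by
        rw [smul_smul]
        congr 1
        field_simp
      rw [hFmem, hc]
      apply hscaleR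
      · positivity
      · rw [mul_inv_lt_iff₀ hu0, one_mul]; exact hu
      · rw [← hderiv]; exact hFd
    apply le_of_forall_gt_imp_ge_of_dense
    intro u hu
    exact csInf_le hSGbdd (hmemSG u hu)
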